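/- Let n ≥ 3 and k ≥ 1, and let (x, c, u) be a combinatorial degenerated magic polygon D(n,k). Then the magic sum satisfies u = (k+1)·(k²·(n−2)+k+2)/2. -/

import Mathlib

/-- The labeling function of a combinatorial degenerated magic polygon `D(n,k)`:
the labels `x t p` of the points on the `k` polygons (root vertex excluded)
together with the root label `c`. -/
def degMagicLabels (n k : ℕ) (x : Fin k → Fin (k * (n - 2) + 1) → ℕ) (c : ℕ) :
    (Fin k × Fin (k * (n - 2) + 1)) ⊕ Unit → ℕ :=
  Sum.elim (fun q => x q.1 q.2) (fun _ => c)

open Fin.NatCast in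
/-- `(x, c, u)` is a combinatorial degenerated magic polygon `D(n,k)`:
(1) the `k²(n−2)+k+1` labels are exactly `1, …, k²(n−2)+k+1`, each occurring once;
(2) every edge sum `∑_{j=0}^{k} x t (i·k + j)`, for an edge not adjacent to the
root (`0 ≤ i ≤ n−3`), equals `u`;
(3) for every position `p`, the sum `(∑ t, x t p) + c` along the segment joining
the root vertex to the boundary of the largest polygon equals `u`. -/
def IsDegMagicPolygon (n k : ℕ) (x : Fin k → Fin (k * (n - 2) + 1) → ℕ) (c u : ℕ) : Prop :=
  Function.Injective (degMagicLabels n k x c) ∧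
  Set.range (degMagicLabels n k x c) = Set.Icc 1 (k ^ 2 * (n - 2) + k + 1) ∧
  (∀ t : Fin k, ∀ i ∈ Finset.range (n - 2),
    ∑ j ∈ Finset.range (k + 1), x t ((i * k + j : ℕ)) = u) ∧
  (∀ p : Fin (k * (n - 2) + 1), (∑ t : Fin k, x t p) + c = u)

open Fin.NatCast

private lemma aux_block (g : ℕ → ℕ) (k : ℕ) :
    ∀ a, ∑ i ∈ Finset.range a, ∑ j ∈ Finset.range k, g (i * k + j)
      = ∑ m ∈ Finset.range (a * k), g m := by
  intro a
  induction a with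
  | zero => simp
  | succ a ih =>
    rw [Finset.sum_range_succ, ih, Nat.succ_mul, Finset.sum_range_add]

theorem degMagicPolygon_magicSum (n k : ℕ) (hn : 3 ≤ n) (hk : 1 ≤ k)
    (x : Fin k → Fin (k * (n - 2) + 1) → ℕ) (c u : ℕ)
    (h : IsDegMagicPolygon n k x c u) :
    u = (k + 1) * (k ^ 2 * (n - 2) + k + 2) / 2 := by
  obtain ⟨hinj, hrange, hedge, hseg⟩ := h
  set N := k ^ 2 * (n - 2) + k + 1 with hN
  -- total sum of labels equals the Gauss sum
  have himg : (Finset.univ.image (degMagicLabels n k x c)) = Finset.Icc 1 N := by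
    apply Finset.coe_injective
    rw [Finset.coe_image, Finset.coe_univ, Set.image_univ, hrange, Finset.coe_Icc]
  have hS0 : ∑ a : (Fin k × Fin (k * (n - 2) + 1)) ⊕ Unit, degMagicLabels n k x c a
      = ∑ m ∈ Finset.Icc 1 N, m := by
    rw [← himg, Finset.sum_image (fun a _ b _ hab => hinj hab)]
  set S := ∑ m ∈ Finset.Icc 1 N, m with hSdef
  have hins : Finset.range (N + 1) = insert 0 (Finset.Icc 1 N) := by
    ext m; simp [Finset.mem_range, Finset.mem_Icc]; omega
  have hGauss : 2 * S = N * (N + 1) := by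
    have h1 := Finset.sum_range_id_mul_two (N + 1)
    rw [hins, Finset.sum_insert (by simp), zero_add, Nat.add_sub_cancel] at h1
    rw [← hSdef] at h1
    rw [mul_comm 2 S, h1, mul_comm]
  set T := ∑ t : Fin k, ∑ p : Fin (k * (n - 2) + 1), x t p with hT
  -- equation A : T + c = S
  have hA : T + c = S := by
    rw [← hS0, hT]
    simp [degMagicLabels, Fintype.sum_sum_type, Fintype.sum_prod_type]
  -- equation B : T + M * c = M * u
  have hB : T + (k * (n - 2) + 1) * c = (k * (n - 2) + 1) * u := by
    have h1 : ∑ p : Fin (k * (n - 2) + 1), ((∑ t : Fin k, x t p) + c)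
        = ∑ p : Fin (k * (n - 2) + 1), u :=
      Finset.sum_congr rfl fun p _ => hseg p
    rw [Finset.sum_add_distrib, Finset.sum_const, Finset.sum_const, Finset.card_univ,
      Fintype.card_fin, smul_eq_mul, smul_eq_mul, Finset.sum_comm] at h1
    rw [hT]
    omega
  -- per-polygon edge equation
  have key : ∀ t : Fin k,
      (∑ p : Fin (k * (n - 2) + 1), x t p)
        + (∑ i ∈ Finset.range (n - 3), x t (((i + 1) * k : ℕ))) = (n - 2) * u := by
    intro t
    have h1 : ∑ i ∈ Finset.range (n - 2), ∑ j ∈ Finset.range (k + 1), x t ((i * k + j : ℕ))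
        = (n - 2) * u := by
      rw [Finset.sum_congr rfl (hedge t), Finset.sum_const, Finset.card_range, smul_eq_mul]
    have h2 : ∑ i ∈ Finset.range (n - 2), ∑ j ∈ Finset.range (k + 1), x t ((i * k + j : ℕ))
        = (∑ i ∈ Finset.range (n - 2), ∑ j ∈ Finset.range k, x t ((i * k + j : ℕ)))
          + ∑ i ∈ Finset.range (n - 2), x t (((i + 1) * k : ℕ)) := by
      rw [← Finset.sum_add_distrib]
      refine Finset.sum_congr rfl fun i _ => ?_
      rw [Finset.sum_range_succ]
      congr 2
      ring
    have h3 : ∑ i ∈ Finset.range (n - 2), ∑ j ∈ Finset.range k, x t ((i * k + j : ℕ))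
        = ∑ m ∈ Finset.range ((n - 2) * k), x t ((m : ℕ)) :=
      aux_block (fun m => x t ((m : ℕ))) k (n - 2)
    have h4 : ∑ i ∈ Finset.range (n - 2), x t (((i + 1) * k : ℕ))
        = (∑ i ∈ Finset.range (n - 3), x t (((i + 1) * k : ℕ)))
          + x t (((n - 2) * k : ℕ)) := by
      rw [show Finset.range (n - 2) = Finset.range ((n - 3) + 1) from by
            rw [show n - 3 + 1 = n - 2 from by omega], Finset.sum_range_succ,
        show (n - 3 + 1) * k = (n - 2) * k from by rw [show n - 3 + 1 = n - 2 from by omega]]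
    have h5 : (∑ m ∈ Finset.range ((n - 2) * k), x t ((m : ℕ))) + x t (((n - 2) * k : ℕ))
        = ∑ p : Fin (k * (n - 2) + 1), x t p := by
      rw [← Finset.sum_range_succ]
      rw [show (n - 2) * k + 1 = k * (n - 2) + 1 by ring]
      rw [← Fin.sum_univ_eq_sum_range (fun m => x t ((m : ℕ))) (k * (n - 2) + 1)]
      simp [Fin.cast_val_eq_self]
    rw [h2, h3, h4] at h1
    omega
  -- equation C : T + I = k * ((n-2) * u)
  set I := ∑ t : Fin k, ∑ i ∈ Finset.range (n - 3), x t (((i + 1) * k : ℕ)) with hI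
  have hC : T + I = k * ((n - 2) * u) := by
    have h1 : ∑ t : Fin k, ((∑ p : Fin (k * (n - 2) + 1), x t p)
        + (∑ i ∈ Finset.range (n - 3), x t (((i + 1) * k : ℕ))))
        = ∑ _t : Fin k, (n - 2) * u := Finset.sum_congr rfl fun t _ => key t
    rw [Finset.sum_add_distrib, Finset.sum_const, Finset.card_univ, Fintype.card_fin,
      smul_eq_mul] at h1
    rw [hT, hI]
    omega
  -- equation D : I + (n-3) * c = (n-3) * u
  have hD : I + (n - 3) * c = (n - 3) * u := by
    have h1 : ∑ i ∈ Finset.range (n - 3),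
        ((∑ t : Fin k, x t (((i + 1) * k : ℕ))) + c) = ∑ _i ∈ Finset.range (n - 3), u :=
      Finset.sum_congr rfl fun i _ => hseg _
    rw [Finset.sum_add_distrib, Finset.sum_const, Finset.sum_const, Finset.card_range,
      smul_eq_mul, smul_eq_mul] at h1
    have hsw : ∑ i ∈ Finset.range (n - 3), ∑ t : Fin k, x t (((i + 1) * k : ℕ)) = I :=
      Finset.sum_comm
    rw [hI]
    omega
  -- now pure arithmetic, over ℤ
  obtain ⟨m, hm⟩ : ∃ m, n - 2 = m + 1 := ⟨n - 3, by omega⟩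
  have hm3 : n - 3 = m := by omega
  rw [hm] at hB hC
  rw [hm3] at hD
  have hA' : (T : ℤ) + c = S := by exact_mod_cast hA
  have hB' : (T : ℤ) + ((k : ℤ) * (m + 1) + 1) * c = ((k : ℤ) * (m + 1) + 1) * u := by
    exact_mod_cast hB
  have hC' : (T : ℤ) + I = (k : ℤ) * (((m : ℤ) + 1) * u) := by exact_mod_cast hC
  have hD' : (I : ℤ) + (m : ℤ) * c = (m : ℤ) * u := by exact_mod_cast hD
  have hG' : 2 * (S : ℤ) = ((k : ℤ) ^ 2 * (m + 1) + k + 1) * (((k : ℤ) ^ 2 * (m + 1) + k + 1) + 1) := by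
    rw [hN, hm] at hGauss
    exact_mod_cast hGauss
  have hu2 : (u : ℤ) = ((k : ℤ) + 1) * c := by
    have hcancel : ((m : ℤ) + 1) * u = ((m : ℤ) + 1) * (((k : ℤ) + 1) * c) := by
      linear_combination hC' - hB' - hD'
    exact mul_left_cancel₀ (by positivity) hcancel
  have h2c : 2 * (c : ℤ) = ((k : ℤ) ^ 2 * (m + 1) + k + 1) + 1 := by
    have hcancel : ((k : ℤ) ^ 2 * (m + 1) + k + 1) * (2 * c)
        = ((k : ℤ) ^ 2 * (m + 1) + k + 1) * (((k : ℤ) ^ 2 * (m + 1) + k + 1) + 1) := by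
      linear_combination hG' + 2 * hA' - 2 * hB' - (2 * ((k : ℤ) * (m + 1) + 1)) * hu2
    exact mul_left_cancel₀ (by positivity) hcancel
  have h2u : 2 * (u : ℤ) = ((k : ℤ) + 1) * (((k : ℤ) ^ 2 * (m + 1) + k + 1) + 1) := by
    linear_combination 2 * hu2 + ((k : ℤ) + 1) * h2c
  have h2uN : 2 * u = (k + 1) * (N + 1) := by
    rw [hN, hm]
    exact_mod_cast h2u
  have hgoal : (k + 1) * (k ^ 2 * (n - 2) + k + 2) = (k + 1) * (N + 1) := by
    rw [hN]
  rw [hgoal]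
  generalize hX : (k + 1) * (N + 1) = X at h2uN ⊢
  omega
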